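/- Let P be a preorder with a coded name B for a real, let A ⊆ ℝ, and let (D_n)_{n∈ℕ} be dense subsets of P (for every p ∈ P and every n there is d ∈ D_n with d ≤ p). If Eve has a winning strategy in the game G(A), then Eve has a strategy which wins the strengthened game in which Eve wins a run exactly when the generated filter g evaluates the name B, val(g) ∈ A, and moreover g ∩ D_n ≠ ∅ for every n ∈ ℕ. -/

import Mathlib

/-- Baire space. -/
abbrev BaireR : Type := ℕ → ℕ

section Game

variable {P : Type*} [Preorder P]

/-- A coded name for a real on the preorder `P`: a family `B n m` of sets of conditions
such that conditions deciding different values at the same coordinate are incompatible. -/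
def CodedName (B : ℕ → ℕ → Set P) : Prop :=
  ∀ n m m', m ≠ m' → ∀ p ∈ B n m, ∀ p' ∈ B n m', ¬ ∃ q, q ≤ p ∧ q ≤ p'

/-- The filter generated by a descending sequence of conditions. -/
def genFilter (p : ℕ → P) : Set P := {q | ∃ i, p i ≤ q}

/-- A strategy for Adam: given the list of earlier moves and the last move played,
it produces Adam's next move.  It must be a legal move (below everything played so far)
at every descending position where it is Adam's turn, i.e. positions of odd length
`l ++ [q]` (so `l` has even length). -/
def IsAdamStrategy (σ : List P → P → P) : Prop :=
  ∀ (l : List P) (q : P), (l ++ [q]).Chain' (fun a b => b ≤ a) → l.length % 2 = 0 →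
    σ l q ≤ q ∧ ∀ r ∈ l, σ l q ≤ r

/-- A strategy for Eve: a function assigning to each position at which it is Eve's turn
(descending positions of even length, including the empty one) a condition below all
conditions played so far. -/
def IsEveStrategy (τ : List P → P) : Prop :=
  ∀ l : List P, l.Chain' (fun a b => b ≤ a) → l.length % 2 = 0 →
    ∀ r ∈ l, τ l ≤ r

/-- An infinite run `p 0 ≥ p 1 ≥ ⋯` is played according to Adam's strategy `σ`
if each odd-indexed move is produced by `σ` from the preceding position. -/
def FollowsAdam (σ : List P → P → P) (p : ℕ → P) : Prop :=
  ∀ k, p (2 * k + 1) = σ (List.ofFn fun i : Fin (2 * k) => p i) (p (2 * k))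

/-- An infinite run is played according to Eve's strategy `τ` if each even-indexed move
is produced by `τ` from the preceding position. -/
def FollowsEve (τ : List P → P) (p : ℕ → P) : Prop :=
  ∀ k, p (2 * k) = τ (List.ofFn fun i : Fin (2 * k) => p i)

/-- Eve wins the run `p` of the game `G(A)` if the generated filter evaluates the
name `B` and the valuation belongs to `A`. -/
def EveWinsRun (B : ℕ → ℕ → Set P) (A : Set BaireR) (p : ℕ → P) : Prop :=
  ∃ x : BaireR, (∀ n, (genFilter p ∩ B n (x n)).Nonempty) ∧ x ∈ A

/-- Adam has a winning strategy in the game `G(A)`;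
equivalently, `A` belongs to the collection `I_P`. -/
def AdamHasWinning (B : ℕ → ℕ → Set P) (A : Set BaireR) : Prop :=
  ∃ σ : List P → P → P, IsAdamStrategy σ ∧
    ∀ p : ℕ → P, Antitone p → FollowsAdam σ p → ¬ EveWinsRun B A p

/-- Eve has a winning strategy in the game `G(A)`. -/
def EveHasWinning (B : ℕ → ℕ → Set P) (A : Set BaireR) : Prop :=
  ∃ τ : List P → P, IsEveStrategy τ ∧
    ∀ p : ℕ → P, Antitone p → FollowsEve τ p → EveWinsRun B A p

end Game

section AuxNS
set_option linter.unusedSectionVars false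
variable {P : Type*} [Preorder P]

noncomputable def auxL (τ : List P → P) (l : List P) : ℕ → List P
  | 0 => []
  | k+1 => auxL τ l k ++ [τ (auxL τ l k), (l[2*k+1]?).getD (τ [])]

open Classical in
noncomputable def baseMove (τ : List P → P) (l : List P) : P :=
  if (∀ r ∈ l, τ (auxL τ l (l.length / 2)) ≤ r) then τ (auxL τ l (l.length / 2))
  else l.getLast?.getD (τ [])

lemma auxL_congr (τ : List P → P) {l l' : List P} (k : ℕ)
    (h : ∀ i < 2*k, l[i]? = l'[i]?) : auxL τ l k = auxL τ l' k := by
  induction k with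
  | zero => rfl
  | succ k ih =>
    have hk : auxL τ l k = auxL τ l' k := ih (fun i hi => h i (by omega))
    rw [auxL, auxL, hk, h (2*k+1) (by omega)]

lemma getLast_le : ∀ (l : List P), l.Chain' (fun a b => b ≤ a) → ∀ (hne : l ≠ []),
    ∀ r ∈ l, l.getLast hne ≤ r
  | [], _, hne, _, _ => absurd rfl hne
  | [a], _, _, r, hr => by
      simp only [List.mem_singleton] at hr; subst hr; simp
  | a :: b :: t, hc, _, r, hr => by
      rw [List.Chain', List.isChain_cons_cons] at hc
      have ih := getLast_le (b :: t) hc.2 (by simp)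
      rw [List.getLast_cons (by simp)]
      rcases List.mem_cons.1 hr with rfl | hr
      · exact le_trans (ih b (by simp)) hc.1
      · exact ih r hr

lemma baseMove_le (τ : List P → P) {l : List P} (hl : l.Chain' (fun a b => b ≤ a)) :
    ∀ r ∈ l, baseMove τ l ≤ r := by
  intro r hr
  unfold baseMove
  split_ifs with h
  · exact h r hr
  · have hne : l ≠ [] := by rintro rfl; simp at hr
    rw [List.getLast?_eq_getLast hne]
    exact getLast_le l hl hne r hr

noncomputable def newStrat (τ : List P → P) (D : ℕ → Set P)
    (hD : ∀ n, ∀ p : P, ∃ d ∈ D n, d ≤ p) (l : List P) : P :=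
  (hD (l.length / 2) (baseMove τ l)).choose

lemma newStrat_mem (τ : List P → P) (D : ℕ → Set P)
    (hD : ∀ n, ∀ p : P, ∃ d ∈ D n, d ≤ p) (l : List P) :
    newStrat τ D hD l ∈ D (l.length / 2) := (hD _ _).choose_spec.1

lemma newStrat_le (τ : List P → P) (D : ℕ → Set P)
    (hD : ∀ n, ∀ p : P, ∃ d ∈ D n, d ≤ p) (l : List P) :
    newStrat τ D hD l ≤ baseMove τ l := (hD _ _).choose_spec.2

end AuxNS

/-- if Eve has a winning strategy in `G(A)` and `(D n)` are dense subsets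
of `P`, then Eve has a strategy winning the strengthened game in which she must
moreover ensure that the generated filter meets every `D n`. -/
theorem stmt_3 {P : Type*} [Preorder P]
    (B : ℕ → ℕ → Set P) (hB : CodedName B)
    (A : Set BaireR) (D : ℕ → Set P)
    (hD : ∀ n, ∀ p : P, ∃ d ∈ D n, d ≤ p)
    (hEve : EveHasWinning B A) :
    ∃ τ : List P → P, IsEveStrategy τ ∧
      ∀ p : ℕ → P, Antitone p → FollowsEve τ p →
        EveWinsRun B A p ∧ ∀ n, (genFilter p ∩ D n).Nonempty := by
  obtain ⟨τ, hτ, hτwin⟩ := hEve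
  refine ⟨newStrat τ D hD, ?_, ?_⟩
  · intro l hl _ r hr
    exact le_trans (newStrat_le τ D hD l) (baseMove_le τ hl r hr)
  intro p hp hfol
  -- real positions and auxiliary positions
  set L : ℕ → List P := fun k => List.ofFn (fun i : Fin (2*k) => p i) with hLdef
  set R : ℕ → List P := fun k => auxL τ (L k) k with hRdef
  have hLlen : ∀ k, (L k).length = 2*k := by intro k; simp [hLdef]
  have hLget : ∀ k i, i < 2*k → (L k)[i]? = some (p i) := by
    intro k i hi
    simp [hLdef, List.getElem?_ofFn, hi]
  have hfolk : ∀ k, p (2*k) = newStrat τ D hD (L k) := fun k => hfol k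
  have hRstep : ∀ k, R (k+1) = R k ++ [τ (R k), p (2*k+1)] := by
    intro k
    have h1 : auxL τ (L (k+1)) k = R k := by
      rw [hRdef]
      exact auxL_congr τ k (fun i hi => by
        rw [hLget (k+1) i (by omega), hLget k i hi])
    rw [hRdef]
    show auxL τ (L (k+1)) (k+1) = _
    rw [auxL, h1, hLget (k+1) (2*k+1) (by omega)]
    rfl
  have hRlen : ∀ k, (R k).length = 2*k := by
    intro k
    induction k with
    | zero => rfl
    | succ k ih => rw [hRstep]; simp [ih]; omega
  have hτle : ∀ k, (R k).Chain' (fun a b => b ≤ a) → ∀ r ∈ R k, τ (R k) ≤ r :=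
    fun k hc => hτ (R k) hc (by rw [hRlen]; omega)
  have hlastmem : ∀ k, p (2*k+1) ∈ R (k+1) := fun k => by rw [hRstep]; simp
  have hcond : ∀ k, (R k).Chain' (fun a b => b ≤ a) → ∀ r ∈ L k, τ (R k) ≤ r := by
    intro k hc r hr
    rw [hLdef] at hr
    obtain ⟨j, hj⟩ := Set.mem_range.1 ((List.mem_ofFn' _ _).1 (by simpa using hr))
    match k with
    | 0 => exact absurd j.2 (by omega)
    | k+1 =>
      calc τ (R (k+1)) ≤ p (2*k+1) := hτle _ hc _ (hlastmem k)
        _ ≤ p j := hp (by omega : (j : ℕ) ≤ 2*k+1)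
        _ = r := hj
  have hbase : ∀ k, (R k).Chain' (fun a b => b ≤ a) → baseMove τ (L k) = τ (R k) := by
    intro k hc
    have h2 : (L k).length / 2 = k := by rw [hLlen]; omega
    have ha : auxL τ (L k) ((L k).length / 2) = R k := by rw [h2, hRdef]
    rw [baseMove, if_pos]
    · rw [ha]
    · rw [ha]; exact hcond k hc
  have hple : ∀ k, (R k).Chain' (fun a b => b ≤ a) → p (2*k) ≤ τ (R k) := by
    intro k hc
    rw [hfolk k]
    exact le_of_le_of_eq (newStrat_le τ D hD (L k)) (hbase k hc)
  have hchain : ∀ k, (R k).Chain' (fun a b => b ≤ a) := by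
    intro k
    induction k with
    | zero => exact List.isChain_nil
    | succ k ih =>
      rw [hRstep, List.Chain', List.isChain_append]
      refine ⟨ih, ?_, ?_⟩
      · refine List.isChain_cons_cons.2 ⟨?_, List.isChain_singleton _⟩
        exact le_trans (hp (by omega : 2*k ≤ 2*k+1)) (hple k ih)
      · intro x hx y hy
        simp only [List.head?_cons, Option.mem_some_iff] at hy
        subst hy
        obtain ⟨hne, rfl⟩ := List.mem_getLast?_eq_getLast hx
        exact hτle k ih _ (List.getLast_mem hne)
  have hmemD : ∀ k, p (2*k) ∈ D k := by
    intro k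
    rw [hfolk k]
    have := newStrat_mem τ D hD (L k)
    rwa [hLlen, (by omega : 2*k/2 = k)] at this
  -- the auxiliary run
  set s : ℕ → P := fun n => if n % 2 = 0 then τ (R (n / 2)) else p n with hsdef
  have hs_even : ∀ k, s (2*k) = τ (R k) := by
    intro k
    have h1 : (2*k) % 2 = 0 := by omega
    have h2 : (2*k) / 2 = k := by omega
    simp [hsdef, h1, h2]
  have hs_odd : ∀ k, s (2*k+1) = p (2*k+1) := by
    intro k
    have h1 : (2*k+1) % 2 = 1 := by omega
    simp [hsdef, h1]
  have hRget : ∀ k i (h : i < 2*k), (R k)[i]'(by rw [hRlen]; exact h) = s i := by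
    intro k
    induction k with
    | zero => intro i h; omega
    | succ k ih =>
      intro i h
      by_cases hik : i < 2*k
      · have := ih i hik
        rw [← this]
        simp only [hRstep]
        rw [List.getElem_append_left]
      · have h2k : i = 2*k ∨ i = 2*k+1 := by omega
        rcases h2k with rfl | rfl
        · simp only [hRstep]
          rw [List.getElem_append_right (hRlen k).le]
          simp [hRlen, hs_even]
        · simp only [hRstep]
          rw [List.getElem_append_right (by rw [hRlen]; omega : (R k).length ≤ 2*k+1)]
          simp [hRlen, hs_odd]
  have hRofFn : ∀ k, R k = List.ofFn (fun i : Fin (2*k) => s i) := by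
    intro k
    apply List.ext_getElem
    · simp [hRlen]
    · intro i h1 h2
      rw [hRget k i (by rw [← hRlen k]; exact h1)]
      simp
  have hs_anti : Antitone s := by
    apply antitone_nat_of_succ_le
    intro n
    rcases Nat.even_or_odd n with ⟨k, hk⟩ | ⟨k, hk⟩
    · have hn : n = 2*k := by omega
      subst hn
      rw [hs_even k, (by rfl : 2*k+1 = 2*k+1), hs_odd k]
      exact le_trans (hp (by omega : 2*k ≤ 2*k+1)) (hple k (hchain k))
    · have hn : n = 2*k+1 := by omega
      subst hn
      rw [hs_odd k, (by omega : 2*k+1+1 = 2*(k+1)), hs_even (k+1)]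
      exact hτle (k+1) (hchain (k+1)) _ (hlastmem k)
  have hs_fol : FollowsEve τ s := by
    intro k
    rw [hs_even k, hRofFn k]
  obtain ⟨x, hx1, hx2⟩ := hτwin s hs_anti hs_fol
  constructor
  · refine ⟨x, fun n => ?_, hx2⟩
    obtain ⟨q, ⟨i, hi⟩, hqB⟩ := hx1 n
    refine ⟨q, ?_, hqB⟩
    rcases Nat.even_or_odd i with ⟨k, hk⟩ | ⟨k, hk⟩
    · have hi2 : i = 2*k := by omega
      subst hi2
      exact ⟨2*k, le_trans (hple k (hchain k)) ((hs_even k) ▸ hi)⟩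
    · have hi2 : i = 2*k+1 := by omega
      subst hi2
      exact ⟨2*k+1, (hs_odd k) ▸ hi⟩
  · intro n
    exact ⟨p (2*n), ⟨2*n, le_refl _⟩, hmemD n⟩
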